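/- Let f be a Schwartz function on ℝⁿ and define (J^k f)(x,ξ) = ∫_{−∞}^{∞} t^k f(x+tξ) dt for (x,ξ) ∈ ℝⁿ×(ℝⁿ∖{0}). Then for all 0 ≤ ℓ ≤ k and indices j₁,…,j_ℓ, one has ∂^ℓ(J^k f)/∂x^{j₁}⋯∂x^{j_ℓ} = ∂^ℓ(J^{k−ℓ} f)/∂ξ^{j₁}⋯∂ξ^{j_ℓ}. -/

import Mathlib

/-- Partial derivative in the `i`-th `x`-direction for functions of `(x,ξ) ∈ ℝⁿ×ℝⁿ`. -/
noncomputable def pdx (n : ℕ) (i : Fin n) (ψ : (Fin n → ℝ) × (Fin n → ℝ) → ℝ) :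
    (Fin n → ℝ) × (Fin n → ℝ) → ℝ :=
  fun p => fderiv ℝ ψ p (Pi.single i 1, 0)

/-- Partial derivative in the `i`-th `ξ`-direction. -/
noncomputable def pdxi (n : ℕ) (i : Fin n) (ψ : (Fin n → ℝ) × (Fin n → ℝ) → ℝ) :
    (Fin n → ℝ) × (Fin n → ℝ) → ℝ :=
  fun p => fderiv ℝ ψ p (0, Pi.single i 1)

/-- The operator `⟨ξ,∂ₓ⟩ = Σ_p ξ^p ∂/∂x^p`. -/
noncomputable def Dx (n : ℕ) (ψ : (Fin n → ℝ) × (Fin n → ℝ) → ℝ) :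
    (Fin n → ℝ) × (Fin n → ℝ) → ℝ :=
  fun p => ∑ q : Fin n, p.2 q * pdx n q ψ p

/-- Mixed iterated derivative `∂^k/∂x^{j₁}…∂x^{j_q}∂ξ^{j_{q+1}}…∂ξ^{j_k}` along the
multi-index `I`: the first `q` slots are `x`-derivatives, the rest `ξ`-derivatives. -/
noncomputable def mixedD (n k : ℕ) (q : ℕ) (I : Fin k → Fin n)
    (ψ : (Fin n → ℝ) × (Fin n → ℝ) → ℝ) : (Fin n → ℝ) × (Fin n → ℝ) → ℝ :=
  (List.finRange k).foldr
    (fun (a : Fin k) acc => if (a : ℕ) < q then pdx n (I a) acc else pdxi n (I a) acc) ψ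

/-- Symmetrization (averaging over permutations) of a tensor-indexed family of functions. -/
noncomputable def symAvg (n k : ℕ)
    (T : (Fin k → Fin n) → (Fin n → ℝ) × (Fin n → ℝ) → ℝ) (I : Fin k → Fin n) :
    (Fin n → ℝ) × (Fin n → ℝ) → ℝ :=
  fun p => ((Nat.factorial k : ℝ))⁻¹ * ∑ π : Equiv.Perm (Fin k), T (I ∘ π) p

/-- The John operator `J_{ij} = ∂²/∂x^i∂ξ^j − ∂²/∂x^j∂ξ^i`. -/
noncomputable def john (n : ℕ) (i j : Fin n) (ψ : (Fin n → ℝ) × (Fin n → ℝ) → ℝ) :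
    (Fin n → ℝ) × (Fin n → ℝ) → ℝ :=
  fun p => pdx n i (pdxi n j ψ) p - pdx n j (pdxi n i ψ) p

/-- Iterated John operators `J_{i₁j₁}⋯J_{i_rj_r}`. -/
noncomputable def iterJohn (n r : ℕ) (I J : Fin r → Fin n)
    (ψ : (Fin n → ℝ) × (Fin n → ℝ) → ℝ) : (Fin n → ℝ) × (Fin n → ℝ) → ℝ :=
  (List.finRange r).foldr (fun a acc => john n (I a) (J a) acc) ψ

open MeasureTheory

/-- The `k`-th momentum X-ray transform of a scalar function:
`(J^k f)(x,ξ) = ∫ t^k f(x+tξ) dt`. -/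
noncomputable def Jmom (n k : ℕ) (f : SchwartzMap (Fin n → ℝ) ℝ) :
    (Fin n → ℝ) × (Fin n → ℝ) → ℝ :=
  fun p => ∫ t : ℝ, t ^ k * f (p.1 + t • p.2)

section lemma23helpers

open MeasureTheory Metric Filter SchwartzMap

private lemma schwartz_poly_bound {n : ℕ} {V : Type*} [NormedAddCommGroup V] [NormedSpace ℝ V]
    (m : ℕ) (g : SchwartzMap (Fin n → ℝ) V) :
    ∃ C : ℝ, 0 ≤ C ∧ ∀ y, (1 + ‖y‖) ^ m * ‖g y‖ ≤ C := by
  refine ⟨2 ^ m * (Finset.Iic (m, 0)).sup (fun p => SchwartzMap.seminorm ℝ p.1 p.2) g,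
    mul_nonneg (by positivity) (apply_nonneg _ _), fun y => ?_⟩
  simpa using SchwartzMap.one_add_le_sup_seminorm_apply (𝕜 := ℝ) (m := (m, 0)) le_rfl le_rfl g y

private lemma master_bound {n : ℕ} {V : Type*} [NormedAddCommGroup V] [NormedSpace ℝ V]
    (k : ℕ) (g : SchwartzMap (Fin n → ℝ) V) (c M : ℝ) (hc : 0 < c) (hM : 0 ≤ M) :
    ∃ D : ℝ, 0 ≤ D ∧ ∀ (t : ℝ) (y : Fin n → ℝ), c * |t| - M ≤ ‖y‖ →
      |t| ^ k * ((1 + |t|) * ‖g y‖) ≤ D / (1 + t ^ 2) := by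
  obtain ⟨C, hC0, hC⟩ := schwartz_poly_bound (k + 3) g
  set e := min c 1 with he
  have he0 : 0 < e := lt_min hc one_pos
  refine ⟨C * (1 + M) ^ (k + 3) / e ^ (k + 3), by positivity, fun t y hy => ?_⟩
  have ht0 : (0:ℝ) ≤ |t| := abs_nonneg t
  have hy0 : (0:ℝ) ≤ ‖y‖ := norm_nonneg y
  have h1 : (1 + c * |t|) ≤ (1 + M) * (1 + ‖y‖) := by nlinarith
  have h2 : e * (1 + |t|) ≤ 1 + c * |t| := by
    have h1' := min_le_left c 1
    have h2' := min_le_right c 1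
    nlinarith
  have key : (e * (1 + |t|)) ^ (k + 3) * ‖g y‖ ≤ C * (1 + M) ^ (k + 3) := by
    calc (e * (1 + |t|)) ^ (k + 3) * ‖g y‖
        ≤ ((1 + M) * (1 + ‖y‖)) ^ (k + 3) * ‖g y‖ :=
          mul_le_mul_of_nonneg_right (pow_le_pow_left₀ (by positivity) (h2.trans h1) _)
            (norm_nonneg _)
      _ = (1 + M) ^ (k + 3) * ((1 + ‖y‖) ^ (k + 3) * ‖g y‖) := by rw [mul_pow, mul_assoc]
      _ ≤ (1 + M) ^ (k + 3) * C := mul_le_mul_of_nonneg_left (hC y) (by positivity)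
      _ = C * (1 + M) ^ (k + 3) := by ring
  rw [le_div_iff₀ (by positivity), le_div_iff₀ (by positivity)]
  have hgt : |t| ^ k * (1 + |t|) * (1 + t ^ 2) ≤ (1 + |t|) ^ (k + 3) := by
    have e1 : |t| ^ k ≤ (1 + |t|) ^ k := pow_le_pow_left₀ ht0 (by linarith) k
    have e2 : 1 + t ^ 2 ≤ (1 + |t|) ^ 2 := by nlinarith [sq_abs t]
    calc |t| ^ k * (1 + |t|) * (1 + t ^ 2)
        ≤ (1 + |t|) ^ k * (1 + |t|) * (1 + |t|) ^ 2 := by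
          have hA : (0:ℝ) ≤ 1 + |t| := by linarith
          have h3 : (0:ℝ) ≤ 1 + t ^ 2 := by positivity
          gcongr
      _ = (1 + |t|) ^ (k + 3) := by ring
  calc |t| ^ k * ((1 + |t|) * ‖g y‖) * (1 + t ^ 2) * e ^ (k + 3)
      = (|t| ^ k * (1 + |t|) * (1 + t ^ 2)) * (e ^ (k + 3) * ‖g y‖) := by ring
    _ ≤ (1 + |t|) ^ (k + 3) * (e ^ (k + 3) * ‖g y‖) :=
        mul_le_mul_of_nonneg_right hgt (by positivity)
    _ = (e * (1 + |t|)) ^ (k + 3) * ‖g y‖ := by rw [mul_pow]; ring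
    _ ≤ C * (1 + M) ^ (k + 3) := key

private noncomputable def lmap (n : ℕ) (t : ℝ) :
    ((Fin n → ℝ) × (Fin n → ℝ)) →L[ℝ] (Fin n → ℝ) :=
  ContinuousLinearMap.fst ℝ _ _ + t • ContinuousLinearMap.snd ℝ _ _

private lemma lmap_apply {n : ℕ} (t : ℝ) (q : (Fin n → ℝ) × (Fin n → ℝ)) :
    lmap n t q = q.1 + t • q.2 := rfl

private lemma lmap_norm {n : ℕ} (t : ℝ) : ‖lmap n t‖ ≤ 1 + |t| := by
  refine ContinuousLinearMap.opNorm_le_bound _ (by positivity) fun q => ?_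
  rw [lmap_apply]
  calc ‖q.1 + t • q.2‖ ≤ ‖q.1‖ + |t| * ‖q.2‖ := by
        refine (norm_add_le _ _).trans ?_
        rw [norm_smul, Real.norm_eq_abs]
    _ ≤ ‖q‖ + |t| * ‖q‖ := by gcongr; exacts [norm_fst_le q, norm_snd_le q]
    _ = (1 + |t|) * ‖q‖ := by ring

private lemma jmom_key (n k : ℕ) (f : SchwartzMap (Fin n → ℝ) ℝ)
    (p : (Fin n → ℝ) × (Fin n → ℝ)) (hp : p.2 ≠ 0) :
    Integrable (fun t : ℝ =>
        t ^ k • ((fderiv ℝ f (p.1 + t • p.2)).comp (lmap n t))) ∧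
    HasFDerivAt (Jmom n k f)
      (∫ t : ℝ, t ^ k • ((fderiv ℝ f (p.1 + t • p.2)).comp (lmap n t))) p := by
  set ε := ‖p.2‖ / 2 with hεdef
  have hε : 0 < ε := by
    have : 0 < ‖p.2‖ := norm_pos_iff.2 hp
    positivity
  set M : ℝ := ‖p.1‖ + ε with hMdef
  have hM : 0 ≤ M := by positivity
  have hball : ∀ q ∈ ball p ε, ∀ t : ℝ, ε * |t| - M ≤ ‖q.1 + t • q.2‖ := by
    intro q hq t
    have hd : ‖q - p‖ < ε := by rw [← dist_eq_norm]; exact mem_ball.1 hq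
    have h1 : ‖q.1 - p.1‖ ≤ ‖q - p‖ := norm_fst_le (q - p)
    have h2 : ‖q.2 - p.2‖ ≤ ‖q - p‖ := norm_snd_le (q - p)
    have hq1 : ‖q.1‖ ≤ M := by
      have h := norm_sub_norm_le q.1 p.1
      rw [hMdef]; linarith
    have hq2 : ε ≤ ‖q.2‖ := by
      have h := norm_sub_norm_le p.2 q.2
      rw [norm_sub_rev] at h
      have h3 : ‖p.2‖ = 2 * ε := by rw [hεdef]; ring
      linarith
    have h4 : |t| * ‖q.2‖ - ‖q.1‖ ≤ ‖q.1 + t • q.2‖ := by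
      have h := norm_sub_norm_le (t • q.2) (q.1 + t • q.2)
      have h5 : t • q.2 - (q.1 + t • q.2) = -q.1 := by abel
      rw [h5, norm_neg, norm_smul, Real.norm_eq_abs] at h
      linarith
    nlinarith [abs_nonneg t]
  -- continuity facts
  have hcurve : ∀ q : (Fin n → ℝ) × (Fin n → ℝ),
      Continuous fun t : ℝ => q.1 + t • q.2 :=
    fun q => continuous_const.add (continuous_id.smul continuous_const)
  have hFmeas : ∀ q : (Fin n → ℝ) × (Fin n → ℝ),
      AEStronglyMeasurable (fun t : ℝ => t ^ k * f (q.1 + t • q.2)) volume :=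
    fun q => ((continuous_pow k).mul (f.continuous.comp (hcurve q))).aestronglyMeasurable
  have hfderiv_cont : Continuous fun y : Fin n → ℝ => fderiv ℝ f y := by
    have : (fun y : Fin n → ℝ => fderiv ℝ f y) = ⇑(SchwartzMap.fderivCLM ℝ (Fin n → ℝ) ℝ f) := by
      funext y; rw [SchwartzMap.fderivCLM_apply]
    rw [this]; exact (SchwartzMap.fderivCLM ℝ (Fin n → ℝ) ℝ f).continuous
  have hlmap_cont : Continuous fun t : ℝ => lmap n t :=
    continuous_const.add (continuous_id.smul continuous_const)
  have hF'cont : ∀ q : (Fin n → ℝ) × (Fin n → ℝ), Continuous fun t : ℝ =>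
      t ^ k • ((fderiv ℝ f (q.1 + t • q.2)).comp (lmap n t)) :=
    fun q => (continuous_pow k).smul ((hfderiv_cont.comp (hcurve q)).clm_comp hlmap_cont)
  -- bounds
  obtain ⟨D₁, hD₁0, hD₁⟩ := master_bound k f ε M hε hM
  obtain ⟨D₂, hD₂0, hD₂⟩ := master_bound k (SchwartzMap.fderivCLM ℝ (Fin n → ℝ) ℝ f) ε M hε hM
  have hbnd_int : ∀ D : ℝ, Integrable (fun t : ℝ => D / (1 + t ^ 2)) volume := by
    intro D
    simpa [div_eq_mul_inv] using integrable_inv_one_add_sq.const_mul D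
  have hself : p ∈ ball p ε := mem_ball_self hε
  have hFint : Integrable (fun t : ℝ => t ^ k * f (p.1 + t • p.2)) volume := by
    refine (hbnd_int D₁).mono' (hFmeas p) (Eventually.of_forall fun t => ?_)
    have hb := hD₁ t (p.1 + t • p.2) (hball p hself t)
    have h1 : ‖t ^ k * f (p.1 + t • p.2)‖ = |t| ^ k * ‖f (p.1 + t • p.2)‖ := by
      rw [norm_mul, Real.norm_eq_abs, abs_pow]
    have h2 : |t| ^ k * ‖f (p.1 + t • p.2)‖ ≤ |t| ^ k * ((1 + |t|) * ‖f (p.1 + t • p.2)‖) :=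
      mul_le_mul_of_nonneg_left
        (le_mul_of_one_le_left (norm_nonneg _) (by linarith [abs_nonneg t])) (by positivity)
    rw [h1]; exact h2.trans hb
  have hF'bound : ∀ q ∈ ball p ε, ∀ t : ℝ,
      ‖t ^ k • ((fderiv ℝ f (q.1 + t • q.2)).comp (lmap n t))‖ ≤ D₂ / (1 + t ^ 2) := by
    intro q hq t
    have hb := hD₂ t (q.1 + t • q.2) (hball q hq t)
    rw [SchwartzMap.fderivCLM_apply] at hb
    have h1 : ‖t ^ k • ((fderiv ℝ f (q.1 + t • q.2)).comp (lmap n t))‖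
        ≤ |t| ^ k * (‖fderiv ℝ f (q.1 + t • q.2)‖ * ‖lmap n t‖) := by
      have hn : ‖t ^ k • ((fderiv ℝ f (q.1 + t • q.2)).comp (lmap n t))‖
          = |t| ^ k * ‖(fderiv ℝ f (q.1 + t • q.2)).comp (lmap n t)‖ := by
        rw [norm_smul (t ^ k) ((fderiv ℝ f (q.1 + t • q.2)).comp (lmap n t)),
          Real.norm_eq_abs, abs_pow]
      rw [hn]
      exact mul_le_mul_of_nonneg_left (ContinuousLinearMap.opNorm_comp_le _ _) (by positivity)
    refine h1.trans (le_trans ?_ hb)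
    have h2 : ‖fderiv ℝ f (q.1 + t • q.2)‖ * ‖lmap n t‖
        ≤ (1 + |t|) * ‖fderiv ℝ f (q.1 + t • q.2)‖ := by
      rw [mul_comm (1 + |t|)]
      exact mul_le_mul_of_nonneg_left (lmap_norm t) (norm_nonneg _)
    exact mul_le_mul_of_nonneg_left h2 (by positivity)
  have hF'int : Integrable (fun t : ℝ =>
      t ^ k • ((fderiv ℝ f (p.1 + t • p.2)).comp (lmap n t))) volume := by
    refine (hbnd_int D₂).mono' (hF'cont p).aestronglyMeasurable
      (Eventually.of_forall fun t => hF'bound p hself t)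
  refine ⟨hF'int, ?_⟩
  refine hasFDerivAt_integral_of_dominated_of_fderiv_le (ball_mem_nhds p hε)
    (Eventually.of_forall hFmeas) hFint (hF'cont p).aestronglyMeasurable
    (Eventually.of_forall fun t q hq => hF'bound q hq t) (hbnd_int D₂)
    (Eventually.of_forall fun t q hq => ?_)
  have hl : HasFDerivAt (fun q : (Fin n → ℝ) × (Fin n → ℝ) => q.1 + t • q.2) (lmap n t) q :=
    hasFDerivAt_fst.add ((hasFDerivAt_snd).const_smul t)
  have hf : HasFDerivAt f (fderiv ℝ f (q.1 + t • q.2)) (q.1 + t • q.2) :=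
    (f.differentiable _).hasFDerivAt
  exact (hf.comp q hl).const_mul (t ^ k)

private lemma jmom_fderiv_apply (n k : ℕ) (f : SchwartzMap (Fin n → ℝ) ℝ)
    (p : (Fin n → ℝ) × (Fin n → ℝ)) (hp : p.2 ≠ 0) (v w : Fin n → ℝ) :
    fderiv ℝ (Jmom n k f) p (v, w)
      = ∫ t : ℝ, t ^ k * fderiv ℝ f (p.1 + t • p.2) (v + t • w) := by
  obtain ⟨hint, H⟩ := jmom_key n k f p hp
  rw [H.fderiv, ContinuousLinearMap.integral_apply hint]
  refine integral_congr_ae (Eventually.of_forall fun t => ?_)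
  simp [lmap_apply, smul_eq_mul]
private noncomputable def dFold (n : ℕ) (L : List (Fin n)) (f : SchwartzMap (Fin n → ℝ) ℝ) :
    SchwartzMap (Fin n → ℝ) ℝ :=
  L.foldr (fun j g => LineDeriv.lineDerivOpCLM ℝ (SchwartzMap (Fin n → ℝ) ℝ) (Pi.single j (1 : ℝ) : Fin n → ℝ) g) f

private lemma pdx_jmom (n k : ℕ) (f : SchwartzMap (Fin n → ℝ) ℝ) (j : Fin n)
    (p : (Fin n → ℝ) × (Fin n → ℝ)) (hp : p.2 ≠ 0) :
    pdx n j (Jmom n k f) p = Jmom n k (LineDeriv.lineDerivOpCLM ℝ (SchwartzMap (Fin n → ℝ) ℝ) (Pi.single j (1 : ℝ) : Fin n → ℝ) f) p := by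
  rw [pdx, jmom_fderiv_apply n k f p hp]
  refine integral_congr_ae (Eventually.of_forall fun t => ?_)
  simp [LineDeriv.lineDerivOpCLM_apply, SchwartzMap.lineDerivOp_apply_eq_fderiv]

private lemma pdxi_jmom (n k : ℕ) (f : SchwartzMap (Fin n → ℝ) ℝ) (j : Fin n)
    (p : (Fin n → ℝ) × (Fin n → ℝ)) (hp : p.2 ≠ 0) :
    pdxi n j (Jmom n k f) p = Jmom n (k + 1) (LineDeriv.lineDerivOpCLM ℝ (SchwartzMap (Fin n → ℝ) ℝ) (Pi.single j (1 : ℝ) : Fin n → ℝ) f) p := by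
  rw [pdxi, jmom_fderiv_apply n k f p hp]
  refine integral_congr_ae (Eventually.of_forall fun t => ?_)
  simp only [zero_add, ContinuousLinearMap.map_smul, smul_eq_mul,
    LineDeriv.lineDerivOpCLM_apply, SchwartzMap.lineDerivOp_apply_eq_fderiv]
  ring

private lemma pdx_congr {n : ℕ} (j : Fin n) {g h : (Fin n → ℝ) × (Fin n → ℝ) → ℝ}
    {p : (Fin n → ℝ) × (Fin n → ℝ)} (hev : g =ᶠ[nhds p] h) :
    pdx n j g p = pdx n j h p := by
  unfold pdx; rw [hev.fderiv_eq]

private lemma pdxi_congr {n : ℕ} (j : Fin n) {g h : (Fin n → ℝ) × (Fin n → ℝ) → ℝ}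
    {p : (Fin n → ℝ) × (Fin n → ℝ)} (hev : g =ᶠ[nhds p] h) :
    pdxi n j g p = pdxi n j h p := by
  unfold pdxi; rw [hev.fderiv_eq]

private lemma isOpen_ne_zero (n : ℕ) : IsOpen {q : (Fin n → ℝ) × (Fin n → ℝ) | q.2 ≠ 0} :=
  isOpen_compl_singleton.preimage continuous_snd

private lemma pdx_fold (n k : ℕ) (L : List (Fin n)) (f : SchwartzMap (Fin n → ℝ) ℝ) :
    ∀ p : (Fin n → ℝ) × (Fin n → ℝ), p.2 ≠ 0 →
      L.foldr (fun j acc => pdx n j acc) (Jmom n k f) p = Jmom n k (dFold n L f) p := by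
  induction L with
  | nil => intro p _; rfl
  | cons j L ih =>
    intro p hp
    have hev : (L.foldr (fun j acc => pdx n j acc) (Jmom n k f)) =ᶠ[nhds p]
        Jmom n k (dFold n L f) := by
      filter_upwards [(isOpen_ne_zero n).mem_nhds hp] with q hq using ih q hq
    show pdx n j (L.foldr (fun j acc => pdx n j acc) (Jmom n k f)) p = _
    rw [pdx_congr j hev, pdx_jmom n k _ j p hp]
    rfl

private lemma pdxi_fold (n k : ℕ) (L : List (Fin n)) (f : SchwartzMap (Fin n → ℝ) ℝ) :
    ∀ p : (Fin n → ℝ) × (Fin n → ℝ), p.2 ≠ 0 →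
      L.foldr (fun j acc => pdxi n j acc) (Jmom n k f) p
        = Jmom n (k + L.length) (dFold n L f) p := by
  induction L with
  | nil => intro p _; rfl
  | cons j L ih =>
    intro p hp
    have hev : (L.foldr (fun j acc => pdxi n j acc) (Jmom n k f)) =ᶠ[nhds p]
        Jmom n (k + L.length) (dFold n L f) := by
      filter_upwards [(isOpen_ne_zero n).mem_nhds hp] with q hq using ih q hq
    show pdxi n j (L.foldr (fun j acc => pdxi n j acc) (Jmom n k f)) p = _
    rw [pdxi_congr j hev, pdxi_jmom n (k + L.length) _ j p hp]
    rfl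

end lemma23helpers

/-- Lemma 2.3 -/
theorem stmt4 (n k ℓ : ℕ) (hℓ : ℓ ≤ k) (f : SchwartzMap (Fin n → ℝ) ℝ)
    (J : Fin ℓ → Fin n) :
    ∀ x ξ : Fin n → ℝ, ξ ≠ 0 →
      mixedD n ℓ ℓ J (Jmom n k f) (x, ξ) = mixedD n ℓ 0 J (Jmom n (k - ℓ) f) (x, ξ) := by
  intro x ξ hξ
  have hp : ((x, ξ) : (Fin n → ℝ) × (Fin n → ℝ)).2 ≠ 0 := hξ
  have hL : mixedD n ℓ ℓ J (Jmom n k f) =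
      ((List.finRange ℓ).map J).foldr (fun j acc => pdx n j acc) (Jmom n k f) := by
    rw [mixedD, List.foldr_map]
    congr 1
    funext a acc
    rw [if_pos a.isLt]
  have hR : mixedD n ℓ 0 J (Jmom n (k - ℓ) f) =
      ((List.finRange ℓ).map J).foldr (fun j acc => pdxi n j acc) (Jmom n (k - ℓ) f) := by
    rw [mixedD, List.foldr_map]
    congr 1
  rw [hL, hR, pdx_fold n k _ f _ hp, pdxi_fold n (k - ℓ) _ f _ hp]
  have hlen : ((List.finRange ℓ).map J).length = ℓ := by simp
  rw [hlen, Nat.sub_add_cancel hℓ]
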